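/- Let w = P_1…P_n be a coherent word of starters and terminators and 1 ≤ i ≤ n−1. If P_i and P_{i+1} are both starters or both terminators, then τ_i(w) ~ w. -/

import Mathlib

set_option maxHeartbeats 1000000

universe u v w

/-- An ipomset over event universe `E` and alphabet `A`:
a finite set of events with a precedence order `lt`, an event order `evord`,
source and target sets, and a labeling. -/
structure Ipomset (E : Type u) (A : Type v) where
  events : Finset E
  lt : E → E → Prop
  evord : E → E → Prop
  src : Finset E
  tgt : Finset E
  lab : E → A
  lt_mem : ∀ {x y}, lt x y → x ∈ events ∧ y ∈ events
  evord_mem : ∀ {x y}, evord x y → x ∈ events ∧ y ∈ events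
  lt_irrefl : ∀ x, ¬ lt x x
  lt_trans : ∀ {x y z}, lt x y → lt y z → lt x z
  evord_irrefl : ∀ x, ¬ evord x x
  evord_trans : ∀ {x y z}, evord x y → evord y z → evord x z
  order_total : ∀ {x y}, x ∈ events → y ∈ events → x ≠ y →
      lt x y ∨ lt y x ∨ evord x y ∨ evord y x
  src_sub : src ⊆ events
  tgt_sub : tgt ⊆ events
  src_min : ∀ {x y}, x ∈ src → ¬ lt y x
  tgt_max : ∀ {x y}, x ∈ tgt → ¬ lt x y

namespace Ipomset

variable {E : Type u} {A : Type v}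

/-- An ipomset is interval if its precedence order admits an interval representation. -/
def Interval (P : Ipomset E A) : Prop :=
  ∃ b e : E → ℝ, (∀ x ∈ P.events, b x ≤ e x) ∧
    ∀ x ∈ P.events, ∀ y ∈ P.events, (P.lt x y ↔ e x < b y)

/-- Discrete: empty precedence order. -/
def Discrete (P : Ipomset E A) : Prop := ∀ x y, ¬ P.lt x y

/-- A starter is a discrete ipomset with `tgt = events`. -/
def Starter (P : Ipomset E A) : Prop := P.Discrete ∧ P.tgt = P.events

/-- A terminator is a discrete ipomset with `src = events`. -/
def Terminator (P : Ipomset E A) : Prop := P.Discrete ∧ P.src = P.events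

/-- An identity is a discrete ipomset with `src = tgt = events`. -/
def IsIdentity (P : Ipomset E A) : Prop :=
  P.Discrete ∧ P.src = P.events ∧ P.tgt = P.events

end Ipomset

/-- A conclist: a finite set with a strict total order (the event order) and labeling. -/
structure Conclist (E : Type u) (A : Type v) where
  events : Finset E
  evord : E → E → Prop
  lab : E → Option A
  evord_mem : ∀ {x y}, evord x y → x ∈ events ∧ y ∈ events
  evord_irrefl : ∀ x, ¬ evord x x
  evord_trans : ∀ {x y z}, evord x y → evord y z → evord x z
  evord_total : ∀ {x y}, x ∈ events → y ∈ events → x ≠ y → evord x y ∨ evord y x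

variable {E : Type u} {A : Type v}

/-- The source interface of an ipomset: the conclist on its source set. -/
def Ipomset.srcIface [DecidableEq E] (P : Ipomset E A) : Conclist E A where
  events := P.src
  evord x y := x ∈ P.src ∧ y ∈ P.src ∧ P.evord x y
  lab x := if x ∈ P.src then some (P.lab x) else none
  evord_mem h := ⟨h.1, h.2.1⟩
  evord_irrefl x h := P.evord_irrefl x h.2.2
  evord_trans h1 h2 := ⟨h1.1, h2.2.1, P.evord_trans h1.2.2 h2.2.2⟩
  evord_total {x y} hx hy hxy := by
    rcases P.order_total (P.src_sub hx) (P.src_sub hy) hxy with h | h | h | h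
    · exact absurd h (P.src_min hy)
    · exact absurd h (P.src_min hx)
    · exact Or.inl ⟨hx, hy, h⟩
    · exact Or.inr ⟨hy, hx, h⟩

/-- The target interface of an ipomset: the conclist on its target set. -/
def Ipomset.tgtIface [DecidableEq E] (P : Ipomset E A) : Conclist E A where
  events := P.tgt
  evord x y := x ∈ P.tgt ∧ y ∈ P.tgt ∧ P.evord x y
  lab x := if x ∈ P.tgt then some (P.lab x) else none
  evord_mem h := ⟨h.1, h.2.1⟩
  evord_irrefl x h := P.evord_irrefl x h.2.2
  evord_trans h1 h2 := ⟨h1.1, h2.2.1, P.evord_trans h1.2.2 h2.2.2⟩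
  evord_total {x y} hx hy hxy := by
    rcases P.order_total (P.tgt_sub hx) (P.tgt_sub hy) hxy with h | h | h | h
    · exact absurd h (P.tgt_max hx)
    · exact absurd h (P.tgt_max hy)
    · exact Or.inl ⟨hx, hy, h⟩
    · exact Or.inr ⟨hy, hx, h⟩

/-- `f` is an isomorphism of ipomsets from `P` to `Q`. -/
structure IsIpoIso (P Q : Ipomset E A) (f : E → E) : Prop where
  maps : ∀ x ∈ P.events, f x ∈ Q.events
  inj : ∀ x ∈ P.events, ∀ y ∈ P.events, f x = f y → x = y
  surj : ∀ y ∈ Q.events, ∃ x ∈ P.events, f x = y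
  src_iff : ∀ x ∈ P.events, (x ∈ P.src ↔ f x ∈ Q.src)
  tgt_iff : ∀ x ∈ P.events, (x ∈ P.tgt ↔ f x ∈ Q.tgt)
  lab_eq : ∀ x ∈ P.events, Q.lab (f x) = P.lab x
  lt_iff : ∀ x ∈ P.events, ∀ y ∈ P.events, (Q.lt (f x) (f y) ↔ P.lt x y)
  evord_iff : ∀ x ∈ P.events, ∀ y ∈ P.events, ¬ P.lt x y → ¬ P.lt y x →
      (P.evord x y ↔ Q.evord (f x) (f y))

/-- `P ≅ Q`: there is an isomorphism of ipomsets from `P` to `Q`. -/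
def IpoIso (P Q : Ipomset E A) : Prop := ∃ f, IsIpoIso P Q f

/-- `f` is a subsumption of ipomsets from `P` to `Q`. -/
structure IsSubsumption (P Q : Ipomset E A) (f : E → E) : Prop where
  maps : ∀ x ∈ P.events, f x ∈ Q.events
  inj : ∀ x ∈ P.events, ∀ y ∈ P.events, f x = f y → x = y
  surj : ∀ y ∈ Q.events, ∃ x ∈ P.events, f x = y
  src_iff : ∀ x ∈ P.events, (x ∈ P.src ↔ f x ∈ Q.src)
  tgt_iff : ∀ x ∈ P.events, (x ∈ P.tgt ↔ f x ∈ Q.tgt)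
  lab_eq : ∀ x ∈ P.events, Q.lab (f x) = P.lab x
  lt_imp : ∀ x ∈ P.events, ∀ y ∈ P.events, Q.lt (f x) (f y) → P.lt x y
  evord_imp : ∀ x ∈ P.events, ∀ y ∈ P.events, ¬ P.lt x y → ¬ P.lt y x →
      P.evord x y → Q.evord (f x) (f y)

/-- `P ⊑ Q`: there is a subsumption from `P` to `Q`. -/
def Subsumes (P Q : Ipomset E A) : Prop := ∃ f, IsSubsumption P Q f

/-- `P ⊏ Q`: `P ⊑ Q` and `P` and `Q` are not isomorphic. -/
def StrictSubsumes (P Q : Ipomset E A) : Prop := Subsumes P Q ∧ ¬ IpoIso P Q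

/-- `f` is an isomorphism of conclists from `U` to `V`. -/
structure IsClIso (U V : Conclist E A) (f : E → E) : Prop where
  maps : ∀ x ∈ U.events, f x ∈ V.events
  inj : ∀ x ∈ U.events, ∀ y ∈ U.events, f x = f y → x = y
  surj : ∀ y ∈ V.events, ∃ x ∈ U.events, f x = y
  lab_eq : ∀ x ∈ U.events, V.lab (f x) = U.lab x
  evord_iff : ∀ x ∈ U.events, ∀ y ∈ U.events, (U.evord x y ↔ V.evord (f x) (f y))

/-- `U ≅ V` for conclists. -/
def ClIso (U V : Conclist E A) : Prop := ∃ f, IsClIso U V f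

/-- `P` and `Q` are composable representatives: the target interface of `P` coincides
with the source interface of `Q` and is exactly the overlap of the event sets. -/
def Composable [DecidableEq E] (P Q : Ipomset E A) : Prop :=
  P.tgtIface = Q.srcIface ∧ P.events ∩ Q.events = P.tgt

/-- One step of the glued precedence order. -/
def glueStep (P Q : Ipomset E A) (x y : E) : Prop :=
  P.lt x y ∨ Q.lt x y ∨
    (x ∈ P.events ∧ x ∉ P.tgt ∧ y ∈ Q.events ∧ y ∉ Q.src)

/-- The glued precedence order: transitive closure. -/
def glueLt (P Q : Ipomset E A) : E → E → Prop :=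
  Relation.TransGen (glueStep P Q)

/-- The glued event order: the union of the two event orders. -/
def glueEvord (P Q : Ipomset E A) (x y : E) : Prop :=
  P.evord x y ∨ Q.evord x y

/-- `R` is the gluing of the composable representatives `P` and `Q`. -/
def IsGlueOf [DecidableEq E] (P Q R : Ipomset E A) : Prop :=
  Composable P Q ∧
  R.events = P.events ∪ Q.events ∧
  (∀ x y, R.lt x y ↔ glueLt P Q x y) ∧
  (∀ x y, R.evord x y ↔ glueEvord P Q x y) ∧
  R.src = P.src ∧ R.tgt = Q.tgt ∧
  (∀ x ∈ P.events, R.lab x = P.lab x) ∧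
  (∀ x ∈ Q.events, R.lab x = Q.lab x)

/-- `R ≅ P * Q`: up to isomorphism, `R` is the gluing of `P` and `Q`. -/
def IsGluing [DecidableEq E] (P Q R : Ipomset E A) : Prop :=
  ∃ P' Q' R', IpoIso P P' ∧ IpoIso Q Q' ∧ IpoIso R R' ∧ IsGlueOf P' Q' R'

/-- A letter of a step sequence: a starter or a terminator. -/
def StepLetter (P : Ipomset E A) : Prop := P.Starter ∨ P.Terminator

/-- A word of starters and terminators is coherent if consecutive interfaces match
(as isomorphism classes of conclists). -/
def Coherent [DecidableEq E] (w : List (Ipomset E A)) : Prop :=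
  (∀ P ∈ w, StepLetter P) ∧
  w.Chain' (fun P Q => ClIso P.tgtIface Q.srcIface)

/-- The congruence `~` on coherent words: generated by composing two subsequent
starters or two subsequent terminators, removing/inserting identities, and
replacing letters by isomorphic ones. -/
inductive StepEquiv {E : Type u} {A : Type v} [DecidableEq E] :
    List (Ipomset E A) → List (Ipomset E A) → Prop
  | glue (u v : List (Ipomset E A)) (P Q R : Ipomset E A) :
      Coherent (u ++ P :: Q :: v) →
      ((P.Starter ∧ Q.Starter) ∨ (P.Terminator ∧ Q.Terminator)) →
      IsGluing P Q R →
      StepEquiv (u ++ P :: Q :: v) (u ++ R :: v)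
  | ident (u v : List (Ipomset E A)) (P : Ipomset E A) :
      Coherent (u ++ P :: v) → P.IsIdentity → u ++ v ≠ [] →
      StepEquiv (u ++ P :: v) (u ++ v)
  | iso (u v : List (Ipomset E A)) (P Q : Ipomset E A) :
      Coherent (u ++ P :: v) → IpoIso P Q →
      StepEquiv (u ++ P :: v) (u ++ Q :: v)
  | refl (w : List (Ipomset E A)) : StepEquiv w w
  | symm {w₁ w₂ : List (Ipomset E A)} : StepEquiv w₁ w₂ → StepEquiv w₂ w₁
  | trans {w₁ w₂ w₃ : List (Ipomset E A)} :
      StepEquiv w₁ w₂ → StepEquiv w₂ w₃ → StepEquiv w₁ w₃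

/-- `R` is (up to isomorphism) the gluing `P₁ * ⋯ * Pₙ` of the word `w = P₁ ⋯ Pₙ`. -/
inductive GlueWord {E : Type u} {A : Type v} [DecidableEq E] :
    List (Ipomset E A) → Ipomset E A → Prop
  | single (P : Ipomset E A) : GlueWord [P] P
  | cons (P : Ipomset E A) (w : List (Ipomset E A)) (R S : Ipomset E A) :
      GlueWord w R → IsGluing P R S → GlueWord (P :: w) S

/-- The discrete ipomset on sub-conclist `V` of the discrete ipomset `W`,
with sources `S` and targets `T`. -/
def letterOf [DecidableEq E] (W : Ipomset E A) (hW : W.Discrete)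
    (V S T : Finset E) : Ipomset E A where
  events := V ∩ W.events
  lt _ _ := False
  evord x y := x ∈ V ∩ W.events ∧ y ∈ V ∩ W.events ∧ W.evord x y
  src := S ∩ (V ∩ W.events)
  tgt := T ∩ (V ∩ W.events)
  lab := W.lab
  lt_mem h := h.elim
  evord_mem h := ⟨h.1, h.2.1⟩
  lt_irrefl _ h := h
  lt_trans h := h.elim
  evord_irrefl x h := W.evord_irrefl x h.2.2
  evord_trans h1 h2 := ⟨h1.1, h2.2.1, W.evord_trans h1.2.2 h2.2.2⟩
  order_total {x y} hx hy hxy := by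
    rcases W.order_total (Finset.mem_inter.mp hx).2 (Finset.mem_inter.mp hy).2 hxy
      with h | h | h | h
    · exact absurd h (hW _ _)
    · exact absurd h (hW _ _)
    · exact Or.inr (Or.inr (Or.inl ⟨hx, hy, h⟩))
    · exact Or.inr (Or.inr (Or.inr ⟨hy, hx, h⟩))
  src_sub := Finset.inter_subset_right
  tgt_sub := Finset.inter_subset_right
  src_min _ h := h
  tgt_max _ h := h

/-- `V↑B`: the starter on the conclist `V` (inside `W`) starting the events of `B`. -/
def upOn [DecidableEq E] (W : Ipomset E A) (hW : W.Discrete) (V B : Finset E) :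
    Ipomset E A :=
  letterOf W hW V (V \ B) V

/-- `V↓B`: the terminator on the conclist `V` (inside `W`) terminating the events of `B`. -/
def downOn [DecidableEq E] (W : Ipomset E A) (hW : W.Discrete) (V B : Finset E) :
    Ipomset E A :=
  letterOf W hW V V (V \ B)

/-- The transposition relation: `TranspAt w w'` holds iff `w' = τᵢ(w)` for some `i`. -/
inductive TranspAt {E : Type u} {A : Type v} [DecidableEq E] :
    List (Ipomset E A) → List (Ipomset E A) → Prop
  | ss (u v : List (Ipomset E A)) (W : Ipomset E A) (hW : W.Discrete)
      (Aa Bb : Finset E) (hA : Aa ⊆ W.events) (hB : Bb ⊆ W.events)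
      (hd : Disjoint Aa Bb) :
      TranspAt (u ++ upOn W hW (W.events \ Bb) Aa :: upOn W hW W.events Bb :: v)
               (u ++ upOn W hW (W.events \ Aa) Bb :: upOn W hW W.events Aa :: v)
  | tt (u v : List (Ipomset E A)) (W : Ipomset E A) (hW : W.Discrete)
      (Aa Bb : Finset E) (hA : Aa ⊆ W.events) (hB : Bb ⊆ W.events)
      (hd : Disjoint Aa Bb) :
      TranspAt (u ++ downOn W hW W.events Aa :: downOn W hW (W.events \ Aa) Bb :: v)
               (u ++ downOn W hW W.events Bb :: downOn W hW (W.events \ Bb) Aa :: v)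
  | st (u v : List (Ipomset E A)) (W : Ipomset E A) (hW : W.Discrete)
      (Aa Bb : Finset E) (hA : Aa ⊆ W.events) (hB : Bb ⊆ W.events)
      (hd : Disjoint Aa Bb) :
      TranspAt (u ++ upOn W hW W.events Aa :: downOn W hW W.events Bb :: v)
               (u ++ downOn W hW (W.events \ Aa) Bb :: upOn W hW (W.events \ Bb) Aa :: v)
  | ts (u v : List (Ipomset E A)) (W : Ipomset E A) (hW : W.Discrete)
      (Aa Bb : Finset E) (hA : Aa ⊆ W.events) (hB : Bb ⊆ W.events)
      (hd : Disjoint Aa Bb) :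
      TranspAt (u ++ downOn W hW (W.events \ Bb) Aa :: upOn W hW (W.events \ Aa) Bb :: v)
               (u ++ upOn W hW W.events Bb :: downOn W hW W.events Aa :: v)

/-- A word is dense if every letter starts or terminates exactly one event. -/
def DenseWord [DecidableEq E] (w : List (Ipomset E A)) : Prop :=
  ∀ P ∈ w, (P.Starter ∧ (P.events \ P.src).card = 1) ∨
    (P.Terminator ∧ (P.events \ P.tgt).card = 1)

/-- There is a chain of transpositions from `w₁` to `w₂` through dense coherent words
all satisfying `pred`. -/
def TranspChain [DecidableEq E] (pred : List (Ipomset E A) → Prop)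
    (w₁ w₂ : List (Ipomset E A)) : Prop :=
  ∃ us : List (List (Ipomset E A)),
    us.head? = some w₁ ∧ us.getLast? = some w₂ ∧
    us.Chain' TranspAt ∧ ∀ u ∈ us, DenseWord u ∧ Coherent u ∧ pred u

/-- A word is sparse if it is a single identity, or its letters are non-identity
starters and terminators which strictly alternate. -/
def SparseWord [DecidableEq E] (w : List (Ipomset E A)) : Prop :=
  (∃ P, w = [P] ∧ P.IsIdentity) ∨
  ((∀ P ∈ w, StepLetter P ∧ ¬ P.IsIdentity) ∧
    w.Chain' (fun P Q => (P.Starter ∧ Q.Terminator) ∨ (P.Terminator ∧ Q.Starter)))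

/-- `w` is THE sparse step decomposition of `P` (up to the chosen representatives). -/
def SparseDecomp [DecidableEq E] (P : Ipomset E A) (w : List (Ipomset E A)) : Prop :=
  SparseWord w ∧ Coherent w ∧ ∃ R, GlueWord w R ∧ IpoIso R P

/-- The transposition exchanging a starter followed by a terminator
(third case of the definition of transpositions): `TranspST w tw` iff `tw = τᵢ(w)`
where the `i`-th factor of `w` is `U↑A · U↓B`. -/
def TranspST [DecidableEq E] (w tw : List (Ipomset E A)) : Prop :=
  ∃ (u v : List (Ipomset E A)) (W : Ipomset E A) (hW : W.Discrete)
    (Aa Bb : Finset E), Aa ⊆ W.events ∧ Bb ⊆ W.events ∧ Disjoint Aa Bb ∧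
    w = u ++ upOn W hW W.events Aa :: downOn W hW W.events Bb :: v ∧
    tw = u ++ downOn W hW (W.events \ Aa) Bb :: upOn W hW (W.events \ Bb) Aa :: v

/-- `w₂ <ₑ w₁` on step sequences: some representative of `w₂` is obtained from a
representative of `w₁` by a starter-terminator transposition. -/
def LtE [DecidableEq E] (w₂ w₁ : List (Ipomset E A)) : Prop :=
  ∃ w₁' w₂', StepEquiv w₁ w₁' ∧ StepEquiv w₂ w₂' ∧ TranspST w₁' w₂'

/-- `≤`: the reflexive-transitive closure of `<ₑ` on step sequences. -/
def StepLe [DecidableEq E] (w₁ w₂ : List (Ipomset E A)) : Prop :=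
  Relation.ReflTransGen (fun x y => LtE x y ∨ StepEquiv x y) w₁ w₂

/-- A higher-dimensional automaton: cells labelled by conclists (identity ipomsets),
face maps satisfying the precubical identities, start and accept cells. -/
structure HDA (X : Type w) (E : Type u) (A : Type v) [DecidableEq E] where
  ev : X → Ipomset E A
  ev_id : ∀ q, (ev q).IsIdentity
  face : Bool → Finset E → X → X
  face_ev : ∀ (b : Bool) (B : Finset E) (q : X), B ⊆ (ev q).events →
    ev (face b B q) =
      letterOf (ev q) (ev_id q).1 ((ev q).events \ B) ((ev q).events \ B)
        ((ev q).events \ B)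
  face_comm : ∀ (b c : Bool) (B C : Finset E) (q : X), Disjoint B C →
    B ⊆ (ev q).events → C ⊆ (ev q).events →
    face b B (face c C q) = face c C (face b B q)
  start : Set X
  accept : Set X

/-- Paths in an HDA, together with their event words (interleaving identities). -/
inductive HPath {X : Type w} {E : Type u} {A : Type v} [DecidableEq E]
    (H : HDA X E A) : X → X → List (Ipomset E A) → Prop
  | nil (q : X) : HPath H q q [H.ev q]
  | up (q p r : X) (w : List (Ipomset E A)) (B : Finset E)
      (hB : B ⊆ (H.ev p).events) :
      q = H.face false B p → HPath H p r w →
      HPath H q r (upOn (H.ev p) (H.ev_id p).1 (H.ev p).events B :: w)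
  | down (p q r : X) (w : List (Ipomset E A)) (B : Finset E)
      (hB : B ⊆ (H.ev p).events) :
      q = H.face true B p → HPath H q r w →
      HPath H p r (downOn (H.ev p) (H.ev_id p).1 (H.ev p).events B :: w)

/-- The language of an HDA: event ipomsets of accepting paths, closed under iso. -/
def HLang {X : Type w} [DecidableEq E] (H : HDA X E A) : Set (Ipomset E A) :=
  {P | ∃ q r w R, q ∈ H.start ∧ r ∈ H.accept ∧ HPath H q r w ∧
    GlueWord w R ∧ IpoIso R P}

/-- An ST-automaton: states labelled by conclists (identity ipomsets), edges labelled
by starters and terminators consistently with the state labels. -/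
structure STAut (Q : Type w) (E : Type u) (A : Type v) [DecidableEq E] where
  lab : Q → Ipomset E A
  lab_id : ∀ q, (lab q).IsIdentity
  edge : Q → Ipomset E A → Q → Prop
  edge_st : ∀ {q P r}, edge q P r → StepLetter P
  edge_src : ∀ {q P r}, edge q P r → P.srcIface = (lab q).srcIface
  edge_tgt : ∀ {q P r}, edge q P r → P.tgtIface = (lab r).srcIface
  start : Set Q
  accept : Set Q

/-- Paths in an ST-automaton together with their labels
`id_{λ(q₀)} P₁ id_{λ(q₁)} ⋯ Pₙ id_{λ(qₙ)}`. -/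
inductive STPath {Q : Type w} {E : Type u} {A : Type v} [DecidableEq E]
    (S : STAut Q E A) : Q → Q → List (Ipomset E A) → Prop
  | nil (q : Q) : STPath S q q [S.lab q]
  | cons (q p r : Q) (P : Ipomset E A) (w : List (Ipomset E A)) :
      S.edge q P p → STPath S p r w → STPath S q r (S.lab q :: P :: w)

/-- The language of an ST-automaton: the `~`-classes of labels of accepting paths
(as a `~`-saturated set of words). -/
def STLang {Q : Type w} [DecidableEq E] (S : STAut Q E A) :
    Set (List (Ipomset E A)) :=
  {w | ∃ q r w', q ∈ S.start ∧ r ∈ S.accept ∧ STPath S q r w' ∧ StepEquiv w w'}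

/-- `S` is the ST-automaton `ST(X)` associated to the HDA `H`. -/
def IsSTof {X : Type w} [DecidableEq E] (H : HDA X E A) (S : STAut X E A) : Prop :=
  S.lab = H.ev ∧ S.start = H.start ∧ S.accept = H.accept ∧
  ∀ q P r, S.edge q P r ↔
    ((∃ B, ∃ _ : B ⊆ (H.ev r).events, q = H.face false B r ∧
        P = upOn (H.ev r) (H.ev_id r).1 (H.ev r).events B) ∨
     (∃ B, ∃ _ : B ⊆ (H.ev q).events, r = H.face true B q ∧
        P = downOn (H.ev q) (H.ev_id q).1 (H.ev q).events B))

/-- The image of a set of ipomsets under `Φ` (sparse step decomposition),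
as a `~`-saturated set of words. -/
def PhiImage [DecidableEq E] (L : Set (Ipomset E A)) : Set (List (Ipomset E A)) :=
  {w | ∃ P ∈ L, ∃ w', SparseDecomp P w' ∧ StepEquiv w w'}

/-- The image of a set of words under `Ψ` (gluing), as an iso-saturated set of ipomsets. -/
def PsiImage [DecidableEq E] (L : Set (List (Ipomset E A))) : Set (Ipomset E A) :=
  {P | ∃ w ∈ L, ∃ R, GlueWord w R ∧ IpoIso R P}

/-- `H` together with `ι` realizes the HDA `HD(S)` obtained from the ST-automaton `S`:
cells of `S` embed via `ι` compatibly with labels, start/accept cells, and each edge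
of `S` is realized by a face map of `H`. -/
def SimulatesST {Q : Type w} {X : Type w} [DecidableEq E]
    (S : STAut Q E A) (H : HDA X E A) (ι : Q → X) : Prop :=
  (∀ q, H.ev (ι q) = S.lab q) ∧
  (∀ q ∈ S.start, ι q ∈ H.start) ∧
  (∀ q ∈ S.accept, ι q ∈ H.accept) ∧
  ∀ q P r, S.edge q P r →
    ((∃ B, ∃ _ : B ⊆ (H.ev (ι r)).events, ι q = H.face false B (ι r) ∧
        P = upOn (H.ev (ι r)) (H.ev_id (ι r)).1 (H.ev (ι r)).events B) ∨
     (∃ B, ∃ _ : B ⊆ (H.ev (ι q)).events, ι r = H.face true B (ι q) ∧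
        P = downOn (H.ev (ι q)) (H.ev_id (ι q)).1 (H.ev (ι q)).events B))


section TranspositionHelpers

variable {E : Type u} {A : Type v}

lemma ipoIso_refl (P : Ipomset E A) : IpoIso P P :=
  ⟨id, fun _ h => h, fun _ _ _ _ h => h, fun y hy => ⟨y, hy, rfl⟩,
    fun _ _ => Iff.rfl, fun _ _ => Iff.rfl, fun _ _ => rfl,
    fun _ _ _ _ => Iff.rfl, fun _ _ _ _ _ _ => Iff.rfl⟩

lemma clIso_of_eq {U V : Conclist E A} (h : U = V) : ClIso U V := by
  subst h
  exact ⟨id, fun _ h => h, fun _ _ _ _ h => h, fun y hy => ⟨y, hy, rfl⟩,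
    fun _ _ => rfl, fun _ _ _ _ => Iff.rfl⟩

lemma Conclist.ext' {U V : Conclist E A} (h1 : U.events = V.events)
    (h2 : ∀ x y, U.evord x y ↔ V.evord x y) (h3 : U.lab = V.lab) : U = V := by
  have he : U.evord = V.evord := by
    funext x y; exact propext (h2 x y)
  cases U; cases V
  simp only at h1 h3 he
  subst h1; subst h3; subst he
  rfl

lemma upOn_starter [DecidableEq E] (W : Ipomset E A) (hW : W.Discrete)
    (V B : Finset E) : (upOn W hW V B).Starter := by
  refine ⟨fun _ _ h => h, ?_⟩
  show V ∩ (V ∩ W.events) = V ∩ W.events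
  rw [← Finset.inter_assoc, Finset.inter_self]

lemma downOn_terminator [DecidableEq E] (W : Ipomset E A) (hW : W.Discrete)
    (V B : Finset E) : (downOn W hW V B).Terminator := by
  refine ⟨fun _ _ h => h, ?_⟩
  show V ∩ (V ∩ W.events) = V ∩ W.events
  rw [← Finset.inter_assoc, Finset.inter_self]

lemma glue_starters [DecidableEq E] (W : Ipomset E A) (hW : W.Discrete)
    (Aa Bb : Finset E) :
    IsGlueOf (upOn W hW (W.events \ Bb) Aa) (upOn W hW W.events Bb)
      (upOn W hW W.events (Aa ∪ Bb)) := by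
  set P := upOn W hW (W.events \ Bb) Aa with hP
  set Q := upOn W hW W.events Bb with hQ
  set R := upOn W hW W.events (Aa ∪ Bb) with hR
  have hPev : P.events = W.events \ Bb := by
    show (W.events \ Bb) ∩ W.events = _
    ext x; simp [Finset.mem_inter, Finset.mem_sdiff]; try tauto
  have hPtgt : P.tgt = W.events \ Bb := by
    show (W.events \ Bb) ∩ ((W.events \ Bb) ∩ W.events) = _
    ext x; simp [Finset.mem_inter, Finset.mem_sdiff]; try tauto
  have hPsrc : P.src = W.events \ (Aa ∪ Bb) := by
    show ((W.events \ Bb) \ Aa) ∩ ((W.events \ Bb) ∩ W.events) = _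
    ext x; simp [Finset.mem_inter, Finset.mem_sdiff, Finset.mem_union]; tauto
  have hQev : Q.events = W.events := by
    show W.events ∩ W.events = _; rw [Finset.inter_self]
  have hQsrc : Q.src = W.events \ Bb := by
    show (W.events \ Bb) ∩ (W.events ∩ W.events) = _
    ext x; simp [Finset.mem_inter, Finset.mem_sdiff]; try tauto
  have hQtgt : Q.tgt = W.events := by
    show W.events ∩ (W.events ∩ W.events) = _
    rw [Finset.inter_self, Finset.inter_self]
  have hRev : R.events = W.events := by
    show W.events ∩ W.events = _; rw [Finset.inter_self]
  have hRsrc : R.src = W.events \ (Aa ∪ Bb) := by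
    show (W.events \ (Aa ∪ Bb)) ∩ (W.events ∩ W.events) = _
    ext x; simp [Finset.mem_inter, Finset.mem_sdiff]; try tauto
  have hRtgt : R.tgt = W.events := by
    show W.events ∩ (W.events ∩ W.events) = _
    rw [Finset.inter_self, Finset.inter_self]
  have hstep : ∀ x y, ¬ glueStep P Q x y := by
    intro x y h
    rcases h with h | h | ⟨h1, h2, _, _⟩
    · exact h
    · exact h
    · exact h2 (by rw [hPtgt, ← hPev]; exact h1)
  refine ⟨⟨?_, ?_⟩, ?_, ?_, ?_, ?_, ?_, ?_, ?_⟩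
  · -- P.tgtIface = Q.srcIface
    apply Conclist.ext'
    · show P.tgt = Q.src; rw [hPtgt, hQsrc]
    · intro x y
      show (x ∈ P.tgt ∧ y ∈ P.tgt ∧ P.evord x y) ↔
        (x ∈ Q.src ∧ y ∈ Q.src ∧ Q.evord x y)
      rw [hPtgt, hQsrc]
      show _ ∧ _ ∧ (x ∈ P.events ∧ y ∈ P.events ∧ W.evord x y) ↔
        _ ∧ _ ∧ (x ∈ Q.events ∧ y ∈ Q.events ∧ W.evord x y)
      rw [hPev, hQev]
      simp only [Finset.mem_sdiff]; tauto
    · funext x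
      show (if x ∈ P.tgt then some (W.lab x) else none) =
        (if x ∈ Q.src then some (W.lab x) else none)
      rw [hPtgt, hQsrc]
  · -- P.events ∩ Q.events = P.tgt
    rw [hPev, hQev, hPtgt]
    ext x; simp [Finset.mem_inter, Finset.mem_sdiff]; try tauto
  · -- R.events = P.events ∪ Q.events
    rw [hRev, hPev, hQev]
    ext x; simp [Finset.mem_union, Finset.mem_sdiff]; tauto
  · -- lt
    intro x y
    constructor
    · intro h; exact absurd h id
    · intro h
      exfalso
      induction h with
      | single h => exact hstep _ _ h
      | tail _ h _ => exact hstep _ _ h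
  · -- evord
    intro x y
    constructor
    · intro h; exact Or.inr h
    · rintro (⟨hx, hy, h⟩ | h)
      · refine ⟨?_, ?_, h⟩
        · show x ∈ W.events ∩ W.events
          rw [Finset.inter_self]
          exact (Finset.mem_inter.mp hx).2
        · show y ∈ W.events ∩ W.events
          rw [Finset.inter_self]
          exact (Finset.mem_inter.mp hy).2
      · exact h
  · rw [hRsrc, hPsrc]
  · rw [hRtgt, hQtgt]
  · intro x _; rfl
  · intro x _; rfl

lemma glue_terminators [DecidableEq E] (W : Ipomset E A) (hW : W.Discrete)
    (Aa Bb : Finset E) :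
    IsGlueOf (downOn W hW W.events Aa) (downOn W hW (W.events \ Aa) Bb)
      (downOn W hW W.events (Aa ∪ Bb)) := by
  set P := downOn W hW W.events Aa with hP
  set Q := downOn W hW (W.events \ Aa) Bb with hQ
  set R := downOn W hW W.events (Aa ∪ Bb) with hR
  have hPev : P.events = W.events := by
    show W.events ∩ W.events = _; rw [Finset.inter_self]
  have hPsrc : P.src = W.events := by
    show W.events ∩ (W.events ∩ W.events) = _
    rw [Finset.inter_self, Finset.inter_self]
  have hPtgt : P.tgt = W.events \ Aa := by
    show (W.events \ Aa) ∩ (W.events ∩ W.events) = _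
    ext x; simp [Finset.mem_inter, Finset.mem_sdiff]; try tauto
  have hQev : Q.events = W.events \ Aa := by
    show (W.events \ Aa) ∩ W.events = _
    ext x; simp [Finset.mem_inter, Finset.mem_sdiff]; try tauto
  have hQsrc : Q.src = W.events \ Aa := by
    show (W.events \ Aa) ∩ ((W.events \ Aa) ∩ W.events) = _
    ext x; simp [Finset.mem_inter, Finset.mem_sdiff]; try tauto
  have hQtgt : Q.tgt = W.events \ (Aa ∪ Bb) := by
    show ((W.events \ Aa) \ Bb) ∩ ((W.events \ Aa) ∩ W.events) = _
    ext x; simp [Finset.mem_inter, Finset.mem_sdiff, Finset.mem_union]; tauto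
  have hRev : R.events = W.events := by
    show W.events ∩ W.events = _; rw [Finset.inter_self]
  have hRsrc : R.src = W.events := by
    show W.events ∩ (W.events ∩ W.events) = _
    rw [Finset.inter_self, Finset.inter_self]
  have hRtgt : R.tgt = W.events \ (Aa ∪ Bb) := by
    show (W.events \ (Aa ∪ Bb)) ∩ (W.events ∩ W.events) = _
    ext x; simp [Finset.mem_inter, Finset.mem_sdiff]; try tauto
  have hstep : ∀ x y, ¬ glueStep P Q x y := by
    intro x y h
    rcases h with h | h | ⟨_, _, h3, h4⟩
    · exact h
    · exact h
    · exact h4 (by rw [hQsrc, ← hQev]; exact h3)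
  refine ⟨⟨?_, ?_⟩, ?_, ?_, ?_, ?_, ?_, ?_, ?_⟩
  · -- P.tgtIface = Q.srcIface
    apply Conclist.ext'
    · show P.tgt = Q.src; rw [hPtgt, hQsrc]
    · intro x y
      show (x ∈ P.tgt ∧ y ∈ P.tgt ∧ P.evord x y) ↔
        (x ∈ Q.src ∧ y ∈ Q.src ∧ Q.evord x y)
      rw [hPtgt, hQsrc]
      show _ ∧ _ ∧ (x ∈ P.events ∧ y ∈ P.events ∧ W.evord x y) ↔
        _ ∧ _ ∧ (x ∈ Q.events ∧ y ∈ Q.events ∧ W.evord x y)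
      rw [hPev, hQev]
      simp only [Finset.mem_sdiff]; tauto
    · funext x
      show (if x ∈ P.tgt then some (W.lab x) else none) =
        (if x ∈ Q.src then some (W.lab x) else none)
      rw [hPtgt, hQsrc]
  · -- P.events ∩ Q.events = P.tgt
    rw [hPev, hQev, hPtgt]
    ext x; simp [Finset.mem_inter, Finset.mem_sdiff]; try tauto
  · -- R.events = P.events ∪ Q.events
    rw [hRev, hPev, hQev]
    ext x; simp [Finset.mem_union, Finset.mem_sdiff]; tauto
  · -- lt
    intro x y
    constructor
    · intro h; exact absurd h id
    · intro h
      exfalso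
      induction h with
      | single h => exact hstep _ _ h
      | tail _ h _ => exact hstep _ _ h
  · -- evord
    intro x y
    constructor
    · intro h; exact Or.inl h
    · rintro (h | ⟨hx, hy, h⟩)
      · exact h
      · refine ⟨?_, ?_, h⟩
        · show x ∈ W.events ∩ W.events
          rw [Finset.inter_self]
          exact (Finset.mem_inter.mp hx).2
        · show y ∈ W.events ∩ W.events
          rw [Finset.inter_self]
          exact (Finset.mem_inter.mp hy).2
  · rw [hRsrc, hPsrc]
  · rw [hRtgt, hQtgt]
  · intro x _; rfl
  · intro x _; rfl

lemma srcIface_congr [DecidableEq E] {P Q : Ipomset E A} (hsrc : P.src = Q.src)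
    (hlab : P.lab = Q.lab)
    (hev : ∀ x y, x ∈ P.src → y ∈ P.src → (P.evord x y ↔ Q.evord x y)) :
    P.srcIface = Q.srcIface := by
  apply Conclist.ext'
  · exact hsrc
  · intro x y
    show (x ∈ P.src ∧ y ∈ P.src ∧ P.evord x y) ↔
      (x ∈ Q.src ∧ y ∈ Q.src ∧ Q.evord x y)
    constructor
    · rintro ⟨hx, hy, h⟩; exact ⟨hsrc ▸ hx, hsrc ▸ hy, (hev x y hx hy).1 h⟩
    · rintro ⟨hx, hy, h⟩
      have hx' : x ∈ P.src := hsrc ▸ hx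
      have hy' : y ∈ P.src := hsrc ▸ hy
      exact ⟨hx', hy', (hev x y hx' hy').2 h⟩
  · funext x
    show (if x ∈ P.src then some (P.lab x) else none) = _
    rw [hsrc, hlab]
    rfl

lemma tgtIface_congr [DecidableEq E] {P Q : Ipomset E A} (htgt : P.tgt = Q.tgt)
    (hlab : P.lab = Q.lab)
    (hev : ∀ x y, x ∈ P.tgt → y ∈ P.tgt → (P.evord x y ↔ Q.evord x y)) :
    P.tgtIface = Q.tgtIface := by
  apply Conclist.ext'
  · exact htgt
  · intro x y
    show (x ∈ P.tgt ∧ y ∈ P.tgt ∧ P.evord x y) ↔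
      (x ∈ Q.tgt ∧ y ∈ Q.tgt ∧ Q.evord x y)
    constructor
    · rintro ⟨hx, hy, h⟩; exact ⟨htgt ▸ hx, htgt ▸ hy, (hev x y hx hy).1 h⟩
    · rintro ⟨hx, hy, h⟩
      have hx' : x ∈ P.tgt := htgt ▸ hx
      have hy' : y ∈ P.tgt := htgt ▸ hy
      exact ⟨hx', hy', (hev x y hx' hy').2 h⟩
  · funext x
    show (if x ∈ P.tgt then some (P.lab x) else none) = _
    rw [htgt, hlab]
    rfl

lemma up_srcIface_swap [DecidableEq E] (W : Ipomset E A) (hW : W.Discrete)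
    (Aa Bb : Finset E) :
    (upOn W hW (W.events \ Aa) Bb).srcIface =
      (upOn W hW (W.events \ Bb) Aa).srcIface := by
  apply srcIface_congr
  · show ((W.events \ Aa) \ Bb) ∩ ((W.events \ Aa) ∩ W.events) =
      ((W.events \ Bb) \ Aa) ∩ ((W.events \ Bb) ∩ W.events)
    ext x; simp [Finset.mem_inter, Finset.mem_sdiff]; try tauto
  · rfl
  · intro x y hx hy
    have hx' : x ∈ ((W.events \ Aa) \ Bb) ∩ ((W.events \ Aa) ∩ W.events) := hx
    have hy' : y ∈ ((W.events \ Aa) \ Bb) ∩ ((W.events \ Aa) ∩ W.events) := hy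
    show (x ∈ (W.events \ Aa) ∩ W.events ∧ y ∈ (W.events \ Aa) ∩ W.events ∧
        W.evord x y) ↔
      (x ∈ (W.events \ Bb) ∩ W.events ∧ y ∈ (W.events \ Bb) ∩ W.events ∧
        W.evord x y)
    simp only [Finset.mem_inter, Finset.mem_sdiff] at hx' hy' ⊢
    tauto

lemma down_tgtIface_swap [DecidableEq E] (W : Ipomset E A) (hW : W.Discrete)
    (Aa Bb : Finset E) :
    (downOn W hW (W.events \ Bb) Aa).tgtIface =
      (downOn W hW (W.events \ Aa) Bb).tgtIface := by
  apply tgtIface_congr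
  · show ((W.events \ Bb) \ Aa) ∩ ((W.events \ Bb) ∩ W.events) =
      ((W.events \ Aa) \ Bb) ∩ ((W.events \ Aa) ∩ W.events)
    ext x; simp [Finset.mem_inter, Finset.mem_sdiff]; try tauto
  · rfl
  · intro x y hx hy
    have hx' : x ∈ ((W.events \ Bb) \ Aa) ∩ ((W.events \ Bb) ∩ W.events) := hx
    have hy' : y ∈ ((W.events \ Bb) \ Aa) ∩ ((W.events \ Bb) ∩ W.events) := hy
    show (x ∈ (W.events \ Bb) ∩ W.events ∧ y ∈ (W.events \ Bb) ∩ W.events ∧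
        W.evord x y) ↔
      (x ∈ (W.events \ Aa) ∩ W.events ∧ y ∈ (W.events \ Aa) ∩ W.events ∧
        W.evord x y)
    simp only [Finset.mem_inter, Finset.mem_sdiff] at hx' hy' ⊢
    tauto

lemma coherent_replace [DecidableEq E] {u v : List (Ipomset E A)}
    {P Q P' Q' : Ipomset E A}
    (h : Coherent (u ++ P :: Q :: v)) (hP' : StepLetter P') (hQ' : StepLetter Q')
    (hsrc : P'.srcIface = P.srcIface) (htgt : Q'.tgtIface = Q.tgtIface)
    (hmid : ClIso P'.tgtIface Q'.srcIface) :
    Coherent (u ++ P' :: Q' :: v) := by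
  obtain ⟨hl, hc⟩ := h
  constructor
  · intro X hX
    rcases List.mem_append.mp hX with h' | h'
    · exact hl X (List.mem_append.mpr (Or.inl h'))
    · rcases List.mem_cons.mp h' with h' | h'
      · exact h' ▸ hP'
      · rcases List.mem_cons.mp h' with h' | h'
        · exact h' ▸ hQ'
        · exact hl X (List.mem_append.mpr (Or.inr (by simp [h'])))
  · simp only [List.Chain', List.isChain_append] at hc ⊢
    obtain ⟨h1, h2, h3⟩ := hc
    refine ⟨h1, ?_, ?_⟩
    · rw [List.isChain_cons_cons] at h2 ⊢
      refine ⟨hmid, ?_⟩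
      rw [List.isChain_cons] at h2 ⊢
      exact ⟨fun y hy => htgt ▸ h2.2.1 y hy, h2.2.2⟩
    · intro x hx y hy
      have hy' : P' = y := by simpa using hy
      subst hy'
      have := h3 x hx P (by simp)
      rw [hsrc]
      exact this

end TranspositionHelpers

/-- If `Pᵢ` and `Pᵢ₊₁` are both starters or both terminators in a
coherent word `w`, then `τᵢ(w) ~ w`. -/
theorem transposition_equiv [DecidableEq E]
    (u v : List (Ipomset E A)) (W : Ipomset E A) (hW : W.Discrete)
    (Aa Bb : Finset E) (hA : Aa ⊆ W.events) (hB : Bb ⊆ W.events)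
    (hd : Disjoint Aa Bb) :
    (Coherent (u ++ upOn W hW (W.events \ Bb) Aa :: upOn W hW W.events Bb :: v) →
      StepEquiv
        (u ++ upOn W hW (W.events \ Aa) Bb :: upOn W hW W.events Aa :: v)
        (u ++ upOn W hW (W.events \ Bb) Aa :: upOn W hW W.events Bb :: v)) ∧
    (Coherent (u ++ downOn W hW W.events Aa :: downOn W hW (W.events \ Aa) Bb :: v) →
      StepEquiv
        (u ++ downOn W hW W.events Bb :: downOn W hW (W.events \ Bb) Aa :: v)
        (u ++ downOn W hW W.events Aa :: downOn W hW (W.events \ Aa) Bb :: v)) := by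
  constructor
  · intro hcoh
    have sP := upOn_starter W hW (W.events \ Bb) Aa
    have sQ := upOn_starter W hW W.events Bb
    have sP' := upOn_starter W hW (W.events \ Aa) Bb
    have sQ' := upOn_starter W hW W.events Aa
    have g1 := glue_starters W hW Aa Bb
    have g2 := glue_starters W hW Bb Aa
    rw [show Bb ∪ Aa = Aa ∪ Bb from Finset.union_comm _ _] at g2
    have hcoh' : Coherent
        (u ++ upOn W hW (W.events \ Aa) Bb :: upOn W hW W.events Aa :: v) :=
      coherent_replace hcoh (Or.inl sP') (Or.inl sQ')
        (up_srcIface_swap W hW Aa Bb) rfl (clIso_of_eq g2.1.1)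
    have e1 : StepEquiv
        (u ++ upOn W hW (W.events \ Bb) Aa :: upOn W hW W.events Bb :: v)
        (u ++ upOn W hW W.events (Aa ∪ Bb) :: v) :=
      StepEquiv.glue u v _ _ _ hcoh (Or.inl ⟨sP, sQ⟩)
        ⟨_, _, _, ipoIso_refl _, ipoIso_refl _, ipoIso_refl _, g1⟩
    have e2 : StepEquiv
        (u ++ upOn W hW (W.events \ Aa) Bb :: upOn W hW W.events Aa :: v)
        (u ++ upOn W hW W.events (Aa ∪ Bb) :: v) :=
      StepEquiv.glue u v _ _ _ hcoh' (Or.inl ⟨sP', sQ'⟩)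
        ⟨_, _, _, ipoIso_refl _, ipoIso_refl _, ipoIso_refl _, g2⟩
    exact e2.trans e1.symm
  · intro hcoh
    have tP := downOn_terminator W hW W.events Aa
    have tQ := downOn_terminator W hW (W.events \ Aa) Bb
    have tP' := downOn_terminator W hW W.events Bb
    have tQ' := downOn_terminator W hW (W.events \ Bb) Aa
    have g1 := glue_terminators W hW Aa Bb
    have g2 := glue_terminators W hW Bb Aa
    rw [show Bb ∪ Aa = Aa ∪ Bb from Finset.union_comm _ _] at g2
    have hcoh' : Coherent
        (u ++ downOn W hW W.events Bb :: downOn W hW (W.events \ Bb) Aa :: v) :=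
      coherent_replace hcoh (Or.inr tP') (Or.inr tQ')
        rfl (down_tgtIface_swap W hW Aa Bb) (clIso_of_eq g2.1.1)
    have e1 : StepEquiv
        (u ++ downOn W hW W.events Aa :: downOn W hW (W.events \ Aa) Bb :: v)
        (u ++ downOn W hW W.events (Aa ∪ Bb) :: v) :=
      StepEquiv.glue u v _ _ _ hcoh (Or.inr ⟨tP, tQ⟩)
        ⟨_, _, _, ipoIso_refl _, ipoIso_refl _, ipoIso_refl _, g1⟩
    have e2 : StepEquiv
        (u ++ downOn W hW W.events Bb :: downOn W hW (W.events \ Bb) Aa :: v)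
        (u ++ downOn W hW W.events (Aa ∪ Bb) :: v) :=
      StepEquiv.glue u v _ _ _ hcoh' (Or.inr ⟨tP', tQ'⟩)
        ⟨_, _, _, ipoIso_refl _, ipoIso_refl _, ipoIso_refl _, g2⟩
    exact e2.trans e1.symm
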